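/- arXiv:2505.05273 — 3 statements merged into one kernel-verified Lean document; each statement's English description precedes it below -/
import Mathlib

section
/- Let L ≥ 1, let p be a probability vector on Fin L, let ℓ : Fin L → ℝ, and let λ > 0. Let Z > 0 and Z_j > 0 be real numbers, and define α = (1/Z) · exp(−(Σ_y p y · ℓ y)/λ) and α_j = (1/Z_j) · Σ_y p y · exp(−ℓ y / λ). Then: (i) Z · α ≤ Z_j · α_j; and (ii) if moreover Z ≤ Z_j, then for every τ ≥ 0, with τ' = (Z / Z_j) · τ, the indicator 𝟙[α_j ≤ τ'] ≤ 𝟙[α ≤ τ]. That is, whenever the joint ideal density ratio rejector rejects at threshold τ', the marginal ideal density ratio rejector rejects at threshold τ. -/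
/-- **Relation between marginal and joint ideal density ratios (Lemma 3.1, pointwise).**
For a probability vector `p` on `Fin L`, a loss `ℓ`, `λ > 0` and normalization constants
`Z, Z_j > 0`, the marginal ratio `α = (1/Z)·exp(-(Σ_y p_y ℓ_y)/λ)` and joint ratio
`α_j = (1/Z_j)·Σ_y p_y exp(-ℓ_y/λ)` satisfy `Z·α ≤ Z_j·α_j`; and if `Z ≤ Z_j`, then for
every `τ ≥ 0`, with `τ' = (Z/Z_j)·τ`, we have `𝟙[α_j ≤ τ'] ≤ 𝟙[α ≤ τ]`. -/
theorem marginal_vs_joint_ratio_rejectors (L : ℕ) (hL : 1 ≤ L)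
    (p : Fin L → ℝ) (hp_nonneg : ∀ y, 0 ≤ p y) (hp_sum : ∑ y, p y = 1)
    (ℓ : Fin L → ℝ) (lam : ℝ) (hlam : 0 < lam)
    (Z Zj : ℝ) (hZ : 0 < Z) (hZj : 0 < Zj)
    (α αj : ℝ)
    (hα : α = (1 / Z) * Real.exp (-(∑ y, p y * ℓ y) / lam))
    (hαj : αj = (1 / Zj) * ∑ y, p y * Real.exp (-(ℓ y) / lam)) :
    Z * α ≤ Zj * αj ∧
      (Z ≤ Zj → ∀ τ : ℝ, 0 ≤ τ →
        (if αj ≤ (Z / Zj) * τ then (1 : ℝ) else 0) ≤ (if α ≤ τ then (1 : ℝ) else 0)) := by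
  have hjensen : Real.exp (∑ y, p y • (-(ℓ y) / lam)) ≤
      ∑ y, p y • Real.exp (-(ℓ y) / lam) :=
    convexOn_exp.map_sum_le (fun i _ => hp_nonneg i) hp_sum (fun i _ => trivial)
  have key : Z * α ≤ Zj * αj := by
    have h1 : Z * α = Real.exp (-(∑ y, p y * ℓ y) / lam) := by
      rw [hα]; field_simp
    have h2 : Zj * αj = ∑ y, p y * Real.exp (-(ℓ y) / lam) := by
      rw [hαj]; field_simp
    rw [h1, h2]
    have : -(∑ y, p y * ℓ y) / lam = ∑ y, p y • (-(ℓ y) / lam) := by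
      rw [neg_div, Finset.sum_div, ← Finset.sum_neg_distrib]
      refine Finset.sum_congr rfl fun y _ => ?_
      rw [smul_eq_mul]
      ring
    rw [this]
    simpa [smul_eq_mul] using hjensen
  refine ⟨key, fun hZZj τ hτ => ?_⟩
  split_ifs with h1 h2
  · exact le_refl 1
  · exfalso
    apply h2
    have : Zj * αj ≤ Z * τ := by
      have := mul_le_mul_of_nonneg_left h1 hZj.le
      calc Zj * αj ≤ Zj * ((Z / Zj) * τ) := this
        _ = Z * τ := by field_simp
    have : Z * α ≤ Z * τ := key.trans this
    exact le_of_mul_le_mul_left this hZ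
  · norm_num
  · norm_num
end

section
/- Let L ≥ 1 and let p, q be probability vectors on Fin L with p y > 0 and q y > 0 for all y, let λ > 1 and κ ∈ ℝ. Then 𝟙[−log(Σ_{y ∈ Fin L} (p y)^{1 − 1/λ} (q y)^{1/λ}) ≥ κ] ≤ 𝟙[Σ_{y ∈ Fin L} p y · log(p y / q y) ≥ λ · κ]. That is, whenever the Bhattacharyya-divergence rejector rejects at threshold κ, the KL-divergence rejector rejects at threshold λ·κ; Bhattacharyya-based rejection is less aggressive than Chow's Rule. -/
/-- **Bhattacharyya rejection is less aggressive than KL rejection (Lemma 4.1,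
second part).** For positive probability vectors `p, q` on `Fin L`, `λ > 1` and any
threshold `κ`, whenever the Bhattacharyya-divergence rejector rejects at level `κ`,
the KL-divergence rejector rejects at level `λ·κ`:
`𝟙[B_{1-1/λ}(p ‖ q) ≥ κ] ≤ 𝟙[KL(p ‖ q) ≥ λ·κ]`. -/
theorem bhattacharyya_rejector_le_kl_rejector (L : ℕ) (hL : 1 ≤ L)
    (p q : Fin L → ℝ) (hp_pos : ∀ y, 0 < p y) (hq_pos : ∀ y, 0 < q y)
    (hp_sum : ∑ y, p y = 1) (hq_sum : ∑ y, q y = 1)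
    (lam κ : ℝ) (hlam : 1 < lam) :
    (if -Real.log (∑ y, (p y) ^ (1 - 1 / lam) * (q y) ^ (1 / lam)) ≥ κ then (1 : ℝ) else 0)
      ≤ (if (∑ y, p y * Real.log (p y / q y)) ≥ lam * κ then (1 : ℝ) else 0) := by
  have hlam0 : (0 : ℝ) < lam := lt_trans one_pos hlam
  by_cases h : -Real.log (∑ y, (p y) ^ (1 - 1 / lam) * (q y) ^ (1 / lam)) ≥ κ
  · have hx : ∀ y, (0 : ℝ) < (q y / p y) ^ (1 / lam) := fun y =>
      Real.rpow_pos_of_pos (div_pos (hq_pos y) (hp_pos y)) _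
    -- rewrite the summand
    have hrw : ∀ y : Fin L, (p y) ^ (1 - 1 / lam) * (q y) ^ (1 / lam)
        = p y * (q y / p y) ^ (1 / lam) := by
      intro y
      rw [Real.div_rpow (hq_pos y).le (hp_pos y).le,
        Real.rpow_sub (hp_pos y), Real.rpow_one]
      field_simp
    -- Jensen: log (∑ p y * x y) ≥ ∑ p y * log (x y)
    have hjensen : ∑ y, p y * Real.log ((q y / p y) ^ (1 / lam))
        ≤ Real.log (∑ y, p y * (q y / p y) ^ (1 / lam)) := by
      have := (strictConcaveOn_log_Ioi.concaveOn).le_map_sum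
        (t := Finset.univ) (w := p) (p := fun y => (q y / p y) ^ (1 / lam))
        (fun i _ => (hp_pos i).le) hp_sum (fun i _ => hx i)
      simpa [smul_eq_mul] using this
    -- compute ∑ p y * log (x y) = -(1/lam) * KL
    have hcomp : ∑ y, p y * Real.log ((q y / p y) ^ (1 / lam))
        = -(1 / lam) * ∑ y, p y * Real.log (p y / q y) := by
      rw [Finset.mul_sum]
      apply Finset.sum_congr rfl
      intro y _
      rw [Real.log_rpow (div_pos (hq_pos y) (hp_pos y)),
        Real.log_div (hq_pos y).ne' (hp_pos y).ne',
        Real.log_div (hp_pos y).ne' (hq_pos y).ne']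
      ring
    -- show KL ≥ lam * κ
    have hS : Real.log (∑ y, (p y) ^ (1 - 1 / lam) * (q y) ^ (1 / lam)) ≤ -κ := by
      linarith
    have hS' : -(1 / lam) * ∑ y, p y * Real.log (p y / q y) ≤ -κ := by
      calc -(1 / lam) * ∑ y, p y * Real.log (p y / q y)
          = ∑ y, p y * Real.log ((q y / p y) ^ (1 / lam)) := hcomp.symm
        _ ≤ Real.log (∑ y, p y * (q y / p y) ^ (1 / lam)) := hjensen
        _ = Real.log (∑ y, (p y) ^ (1 - 1 / lam) * (q y) ^ (1 / lam)) := by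
            congr 1; exact (Finset.sum_congr rfl fun y _ => hrw y).symm
        _ ≤ -κ := hS
    have : lam * κ ≤ ∑ y, p y * Real.log (p y / q y) := by
      have h1 : κ ≤ (1 / lam) * ∑ y, p y * Real.log (p y / q y) := by linarith
      calc lam * κ ≤ lam * ((1 / lam) * ∑ y, p y * Real.log (p y / q y)) := by
            exact mul_le_mul_of_nonneg_left h1 hlam0.le
        _ = ∑ y, p y * Real.log (p y / q y) := by field_simp
    rw [if_pos h, if_pos this]
  · rw [if_neg h]
    split_ifs <;> norm_num
end

section
/- Let (X, 𝒜) be a measurable space, ḡ : X → ℝ any function, λ > 0, Z > 0, and c ≥ 0. Define the marginal ideal density ratio α(x) = (1/Z) · exp(−ḡ(x)/λ) and set τ = (1/Z) · exp(−c/λ). Then for every x ∈ X, 𝟙[α(x) ≤ τ] = 𝟙[ḡ(x) ≥ c]. Hence for every rejection cost c ≥ 0 there exists a threshold τ such that the marginal ideal density ratio rejector r^dr(·; τ) coincides with the optimal rejector of Chow's Rule r*(·; c). -/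
/-- **Density ratio rejection recovers Chow's Rule (Theorem 2.3).**
For any conditional risk `ḡ : X → ℝ`, `λ > 0`, `Z > 0` and cost `c ≥ 0`, the marginal
ideal density ratio `α(x) = (1/Z)·exp(-ḡ(x)/λ)` thresholded at `τ = (1/Z)·exp(-c/λ)`
coincides pointwise with Chow's Rule: `𝟙[α(x) ≤ τ] = 𝟙[ḡ(x) ≥ c]`. -/
theorem density_ratio_rejector_eq_chow {X : Type*} [MeasurableSpace X]
    (g : X → ℝ) (lam Z c : ℝ) (hlam : 0 < lam) (hZ : 0 < Z) (hc : 0 ≤ c) :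
    ∀ x : X,
      (if (1 / Z) * Real.exp (-(g x) / lam) ≤ (1 / Z) * Real.exp (-c / lam)
          then (1 : ℝ) else 0)
        = (if g x ≥ c then (1 : ℝ) else 0) := by
  intro x
  have h : ((1 / Z) * Real.exp (-(g x) / lam) ≤ (1 / Z) * Real.exp (-c / lam)) ↔ g x ≥ c := by
    rw [mul_le_mul_iff_right₀ (by positivity), Real.exp_le_exp,
      div_le_div_iff_of_pos_right hlam]
    constructor <;> intro h <;> linarith
  simp only [one_div] at h
  simp [h, ge_iff_le]
end
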